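/- (Lemma E.2: Hadamard directional differentiability of the supremum functional) Let h : Θ → ℝ be continuous, let h_n : Θ → ℝ be bounded functions converging to h uniformly on Θ, and let (t_n) be positive reals with t_n → 0. Then ( sup_{θ ∈ Θ} (V(θ) + t_n·h_n(θ)) − sup_{θ ∈ Θ} V(θ) ) / t_n → sup_{θ ∈ argmax V} h(θ) as n → ∞; that is, the supremum functional ψ(f) = sup_{θ ∈ Θ} f(θ) is Hadamard directionally differentiable at V tangentially to the continuous bounded functions, with derivative ψ'_V(h) = sup_{θ ∈ argmax V} h(θ). -/
import Mathlib


open Filter Set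

/-- **Lemma E.2: Hadamard directional differentiability of the supremum functional.**
On a compact metric space `Θ`, with `V` and `h` continuous, bounded `h_n` converging
uniformly to `h`, and positive `t_n → 0`,
`(sup_Θ (V + t_n·h_n) − sup_Θ V) / t_n → sup_{argmax V} h`. -/
theorem sup_functional_hadamard_directional_derivative
    {Θ : Type*} [MetricSpace Θ] [CompactSpace Θ] [Nonempty Θ]
    (V : Θ → ℝ) (hV : Continuous V)
    (h : Θ → ℝ) (hh : Continuous h)
    (hseq : ℕ → Θ → ℝ) (hbdd : ∀ n, ∃ C : ℝ, ∀ θ, |hseq n θ| ≤ C)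
    (hunif : TendstoUniformly hseq h atTop)
    (t : ℕ → ℝ) (htpos : ∀ n, 0 < t n) (ht0 : Tendsto t atTop (nhds 0)) :
    Tendsto (fun n => ((⨆ θ, (V θ + t n * hseq n θ)) - ⨆ θ, V θ) / t n)
      atTop (nhds (sSup (h '' {θ | ∀ θ', V θ' ≤ V θ}))) := by
  obtain ⟨θ0, -, hθ0⟩ := isCompact_univ.exists_isMaxOn univ_nonempty hV.continuousOn
  set A : Set Θ := {θ | ∀ θ', V θ' ≤ V θ} with hA
  have hθ0A : θ0 ∈ A := fun θ' => hθ0 (mem_univ θ')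
  have hVbdd : BddAbove (Set.range V) := ⟨V θ0, by rintro x ⟨θ, rfl⟩; exact hθ0A θ⟩
  set M := ⨆ θ, V θ with hM
  have hMle : ∀ θ, V θ ≤ M := fun θ => le_ciSup hVbdd θ
  have hMeq : M = V θ0 := le_antisymm (ciSup_le hθ0A) (hMle θ0)
  have hAclosed : IsClosed A := by
    have : A = ⋂ θ', {θ | V θ' ≤ V θ} := by ext θ; simp [hA]
    rw [this]; exact isClosed_iInter fun θ' => isClosed_le continuous_const hV
  obtain ⟨θs, hθsA, hθs⟩ := hAclosed.isCompact.exists_isMaxOn ⟨θ0, hθ0A⟩ hh.continuousOn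
  set L := sSup (h '' A) with hL
  have hLeq : L = h θs :=
    IsGreatest.csSup_eq ⟨⟨θs, hθsA, rfl⟩, by rintro x ⟨θ, hθA, rfl⟩; exact hθs hθA⟩
  have hVθs : V θs = M := le_antisymm (hMle θs) (hMeq ▸ hθsA θ0)
  -- bound on |h|
  obtain ⟨θa, -, hθa⟩ := isCompact_univ.exists_isMaxOn univ_nonempty hh.abs.continuousOn
  set Ch := |h θa| with hCh
  have hChnn : 0 ≤ Ch := abs_nonneg _
  have hChb : ∀ θ, |h θ| ≤ Ch := fun θ => hθa (mem_univ θ)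
  -- boundedness of the perturbed function, and lower bound via θs
  have hlow : ∀ n, hseq n θs ≤ ((⨆ θ, (V θ + t n * hseq n θ)) - M) / t n := by
    intro n
    obtain ⟨C, hC⟩ := hbdd n
    have hbd : BddAbove (Set.range fun θ => V θ + t n * hseq n θ) := by
      refine ⟨M + t n * C, ?_⟩
      rintro x ⟨θ, rfl⟩
      have h1 : t n * hseq n θ ≤ t n * C :=
        mul_le_mul_of_nonneg_left ((abs_le.1 (hC θ)).2) (htpos n).le
      show V θ + t n * hseq n θ ≤ M + t n * C
      have := hMle θ; linarith
    rw [le_div_iff₀ (htpos n)]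
    have := le_ciSup hbd θs
    rw [hVθs] at this
    linarith [this]
  rw [tendsto_order]
  constructor
  · -- lower bound
    intro a ha
    have hconv : Tendsto (fun n => hseq n θs) atTop (nhds (h θs)) := hunif.tendsto_at θs
    have : ∀ᶠ n in atTop, a < hseq n θs :=
      hconv.eventually (eventually_gt_nhds (hLeq ▸ ha))
    filter_upwards [this] with n hn
    exact hn.trans_le (hlow n)
  · -- upper bound
    intro a ha
    set ε := (a - L) / 3 with hε
    have hεpos : 0 < ε := by rw [hε]; linarith
    -- separation: V is bounded away from M on {h ≥ L + ε}
    have hη : ∃ η > 0, ∀ θ, L + ε ≤ h θ → V θ + η ≤ M := by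
      by_cases hK : ({θ | L + ε ≤ h θ}).Nonempty
      · obtain ⟨θK, hθKmem, hθK⟩ :=
          ((isClosed_le continuous_const hh).isCompact).exists_isMaxOn hK hV.continuousOn
        have hθKnA : θK ∉ A := by
          intro hmem
          have h1 : h θK ≤ L := hLeq ▸ hθs hmem
          have h2 : L + ε ≤ h θK := hθKmem
          linarith
        have hVK : V θK < M := by
          by_contra hc
          push_neg at hc
          exact hθKnA fun θ' => (hMle θ').trans hc
        exact ⟨M - V θK, by linarith, fun θ hθ => by have h1 : V θ ≤ V θK := hθK hθ; linarith⟩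
      · exact ⟨1, one_pos, fun θ hθ => absurd ⟨θ, hθ⟩ hK⟩
    obtain ⟨η, hηpos, hηsep⟩ := hη
    set D := Ch + |L| + 3 * ε with hD
    have hDpos : 0 < D := by have := abs_nonneg L; rw [hD]; linarith
    have ev1 : ∀ᶠ n in atTop, ∀ θ, dist (h θ) (hseq n θ) < ε :=
      Metric.tendstoUniformly_iff.mp hunif ε hεpos
    have ev2 : ∀ᶠ n in atTop, t n < η / D :=
      ht0.eventually (eventually_lt_nhds (div_pos hηpos hDpos))
    filter_upwards [ev1, ev2] with n h1 h2
    have htn := htpos n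
    have htD : t n * D < η := by
      rw [lt_div_iff₀ hDpos] at h2; linarith
    have hsup : (⨆ θ, (V θ + t n * hseq n θ)) ≤ M + t n * (L + 2 * ε) := by
      refine ciSup_le fun θ => ?_
      have hd : |h θ - hseq n θ| < ε := by
        have := h1 θ; rwa [Real.dist_eq] at this
      have hub : hseq n θ < h θ + ε := by
        have := (abs_lt.1 hd).1; linarith
      by_cases hc : h θ < L + ε
      · have h3 : hseq n θ ≤ L + 2 * ε := by linarith
        have h4 : t n * hseq n θ ≤ t n * (L + 2 * ε) :=
          mul_le_mul_of_nonneg_left h3 htn.le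
        have := hMle θ; linarith
      · push_neg at hc
        have h5 : V θ + η ≤ M := hηsep θ hc
        have h6 : hseq n θ ≤ Ch + ε := by
          have h61 := hChb θ; have h62 := le_abs_self (h θ)
          linarith
        have h7 : t n * hseq n θ ≤ t n * (Ch + ε) :=
          mul_le_mul_of_nonneg_left h6 htn.le
        have h8 : t n * ((Ch + ε) - (L + 2 * ε)) ≤ t n * D := by
          refine mul_le_mul_of_nonneg_left ?_ htn.le
          have := neg_abs_le L
          rw [hD]; linarith
        have h9 : t n * ((Ch + ε) - (L + 2 * ε)) = t n * (Ch + ε) - t n * (L + 2 * ε) := by ring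
        linarith
    have : ((⨆ θ, (V θ + t n * hseq n θ)) - M) / t n ≤ L + 2 * ε := by
      rw [div_le_iff₀ htn]; linarith [hsup]
    have hLa : L + 2 * ε < a := by rw [hε]; linarith
    exact this.trans_lt hLa
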